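/- Let A and E be finite nonempty sets, let κ₁, κ₂ > 0 be real numbers, and let φ : A × E → [0, κ₁] be a function such that for any pair of distinct elements a₁, a₂ of A, Σ_{ξ ∈ E} min(φ(a₁,ξ), φ(a₂,ξ)) ≤ κ₂. Then Σ_{a ∈ A} Σ_{ξ ∈ E} φ(a,ξ) ≤ κ₁|E| + κ₂·C(|A|,2), where C(|A|,2) = |A|(|A|−1)/2. -/

import Mathlib

theorem aux_key {α β : Type*} (E : Finset β) (κ₂ : ℝ) (φ : α → β → ℝ)
    (A : Finset α) (hA : A.Nonempty)
    (hnn : ∀ a ∈ A, ∀ ξ ∈ E, 0 ≤ φ a ξ)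
    (hmin : ∀ a₁ ∈ A, ∀ a₂ ∈ A, a₁ ≠ a₂ →
      ∑ ξ ∈ E, min (φ a₁ ξ) (φ a₂ ξ) ≤ κ₂) :
    ∑ a ∈ A, ∑ ξ ∈ E, φ a ξ ≤
      (∑ ξ ∈ E, A.sup' hA (fun a => φ a ξ)) + κ₂ * (A.card.choose 2) := by
  induction hA using Finset.Nonempty.cons_induction with
  | singleton a => simp
  | cons a A ha hA ih =>
    have hnn' : ∀ b ∈ A, ∀ ξ ∈ E, 0 ≤ φ b ξ := fun b hb ξ hξ =>
      hnn b (Finset.mem_cons_of_mem hb) ξ hξ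
    have hmin' : ∀ a₁ ∈ A, ∀ a₂ ∈ A, a₁ ≠ a₂ →
        ∑ ξ ∈ E, min (φ a₁ ξ) (φ a₂ ξ) ≤ κ₂ := fun a₁ h1 a₂ h2 hne =>
      hmin a₁ (Finset.mem_cons_of_mem h1) a₂ (Finset.mem_cons_of_mem h2) hne
    have IH := ih hnn' hmin'
    rw [Finset.sum_cons]
    have step1 : ∑ ξ ∈ E, φ a ξ + ∑ b ∈ A, ∑ ξ ∈ E, φ b ξ ≤
        ∑ ξ ∈ E, (φ a ξ + A.sup' hA (fun b => φ b ξ)) + κ₂ * (A.card.choose 2) := by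
      rw [Finset.sum_add_distrib]
      linarith
    have step2 : ∀ ξ ∈ E, φ a ξ + A.sup' hA (fun b => φ b ξ) =
        (A.cons a ha).sup' (Finset.cons_nonempty ha) (fun b => φ b ξ) +
          min (φ a ξ) (A.sup' hA (fun b => φ b ξ)) := by
      intro ξ hξ
      rw [Finset.sup'_cons (H := hA)]
      have := max_add_min (φ a ξ) (A.sup' hA (fun b => φ b ξ))
      linarith
    have step3 : ∑ ξ ∈ E, min (φ a ξ) (A.sup' hA (fun b => φ b ξ)) ≤
        κ₂ * A.card := by
      have h1 : ∑ ξ ∈ E, min (φ a ξ) (A.sup' hA (fun b => φ b ξ)) ≤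
          ∑ ξ ∈ E, ∑ b ∈ A, min (φ a ξ) (φ b ξ) := by
        apply Finset.sum_le_sum
        intro ξ hξ
        obtain ⟨b, hb, hbeq⟩ := Finset.exists_mem_eq_sup' hA (fun b => φ b ξ)
        rw [hbeq]
        apply Finset.single_le_sum (f := fun b => min (φ a ξ) (φ b ξ)) _ hb
        intro c hc
        exact le_min (hnn a (Finset.mem_cons_self a A) ξ hξ) (hnn' c hc ξ hξ)
      rw [Finset.sum_comm] at h1
      calc ∑ ξ ∈ E, min (φ a ξ) (A.sup' hA (fun b => φ b ξ))
          ≤ ∑ b ∈ A, ∑ ξ ∈ E, min (φ a ξ) (φ b ξ) := h1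
        _ ≤ ∑ b ∈ A, κ₂ := by
            apply Finset.sum_le_sum
            intro b hb
            exact hmin a (Finset.mem_cons_self a A) b (Finset.mem_cons_of_mem hb)
              (fun h => ha (h ▸ hb))
        _ = κ₂ * A.card := by rw [Finset.sum_const, nsmul_eq_mul, mul_comm]
    have hchoose : ((A.cons a ha).card.choose 2 : ℝ) = A.card.choose 2 + A.card := by
      rw [Finset.card_cons]
      rw [Nat.choose_succ_succ]
      push_cast
      simp [Nat.choose_one_right]
      ring
    calc ∑ ξ ∈ E, φ a ξ + ∑ b ∈ A, ∑ ξ ∈ E, φ b ξ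
        ≤ ∑ ξ ∈ E, (φ a ξ + A.sup' hA (fun b => φ b ξ)) + κ₂ * (A.card.choose 2) := step1
      _ = ∑ ξ ∈ E, ((A.cons a ha).sup' (Finset.cons_nonempty ha) (fun b => φ b ξ) +
            min (φ a ξ) (A.sup' hA (fun b => φ b ξ))) + κ₂ * (A.card.choose 2) := by
          rw [Finset.sum_congr rfl step2]
      _ = ∑ ξ ∈ E, (A.cons a ha).sup' (Finset.cons_nonempty ha) (fun b => φ b ξ) +
            (∑ ξ ∈ E, min (φ a ξ) (A.sup' hA (fun b => φ b ξ))) + κ₂ * (A.card.choose 2) := by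
          rw [Finset.sum_add_distrib]
      _ ≤ ∑ ξ ∈ E, (A.cons a ha).sup' (Finset.cons_nonempty ha) (fun b => φ b ξ) +
            κ₂ * A.card + κ₂ * (A.card.choose 2) := by linarith
      _ ≤ _ := by rw [hchoose]; ring_nf; linarith

theorem stmt_9 {α β : Type*} (A : Finset α) (E : Finset β)
    (hA : A.Nonempty) (hE : E.Nonempty)
    (κ₁ κ₂ : ℝ) (hκ₁ : 0 < κ₁) (hκ₂ : 0 < κ₂) (φ : α → β → ℝ)
    (hrange : ∀ a ∈ A, ∀ ξ ∈ E, φ a ξ ∈ Set.Icc 0 κ₁)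
    (hmin : ∀ a₁ ∈ A, ∀ a₂ ∈ A, a₁ ≠ a₂ →
      ∑ ξ ∈ E, min (φ a₁ ξ) (φ a₂ ξ) ≤ κ₂) :
    ∑ a ∈ A, ∑ ξ ∈ E, φ a ξ ≤ κ₁ * E.card + κ₂ * (A.card.choose 2) := by
  have key := aux_key E κ₂ φ A hA
    (fun a ha ξ hξ => (hrange a ha ξ hξ).1) hmin
  have hsup : ∑ ξ ∈ E, A.sup' hA (fun a => φ a ξ) ≤ κ₁ * E.card := by
    calc ∑ ξ ∈ E, A.sup' hA (fun a => φ a ξ) ≤ ∑ ξ ∈ E, κ₁ := by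
          apply Finset.sum_le_sum
          intro ξ hξ
          exact Finset.sup'_le hA _ (fun a ha => (hrange a ha ξ hξ).2)
      _ = κ₁ * E.card := by rw [Finset.sum_const, nsmul_eq_mul, mul_comm]
  linarith
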